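/- Let φ, φ° : ℤ² → ℝ and H : ℤ² → ℝ satisfy the discrete Moutard equations φ₁₂ = −φ + H(φ₁ + φ₂) and φ°₁₂ = −φ° + H(φ°₁ + φ°₂) (where subscripts denote unit shifts in the two lattice directions). Then the discrete one-form with components Δ₁S = φ° φ₁ − φ°₁ φ and Δ₂S = φ°₂ φ − φ° φ₂ is closed, i.e. Δ₂(φ° φ₁ − φ°₁ φ) = Δ₁(φ°₂ φ − φ° φ₂) at every lattice point, so that a potential S : ℤ² → ℝ exists. -/

import Mathlib

noncomputable def Zsum (F : ℤ → ℝ) (n : ℤ) : ℝ :=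
  (∑ i ∈ Finset.Ico (0 : ℤ) n, F i) - ∑ i ∈ Finset.Ico n (0 : ℤ), F i

lemma Zsum_zero (F : ℤ → ℝ) : Zsum F 0 = 0 := by simp [Zsum]

lemma Zsum_succ (F : ℤ → ℝ) (n : ℤ) : Zsum F (n + 1) = Zsum F n + F n := by
  unfold Zsum
  rcases le_or_gt 0 n with h | h
  · have e : Finset.Ico (0:ℤ) (n+1) = insert n (Finset.Ico 0 n) := by
      ext x; simp; omega
    rw [e, Finset.sum_insert (by simp), Finset.Ico_eq_empty (by omega : ¬ (n+1:ℤ) < 0),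
      Finset.Ico_eq_empty (by omega : ¬ (n:ℤ) < 0)]
    simp only [Finset.sum_empty]
    ring
  · have e : Finset.Ico n (0:ℤ) = insert n (Finset.Ico (n+1) 0) := by
      ext x; simp; omega
    rw [e, Finset.sum_insert (by simp), Finset.Ico_eq_empty (by omega : ¬ (0:ℤ) < n + 1),
      Finset.Ico_eq_empty (by omega : ¬ (0:ℤ) < n)]
    simp only [Finset.sum_empty]
    ring

lemma Zsum_char {F : ℤ → ℝ} {h : ℤ → ℝ} {c : ℝ} (h0 : h 0 = c)
    (hs : ∀ n : ℤ, h (n + 1) = h n + F n) : ∀ n : ℤ, h n = c + Zsum F n := by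
  intro n
  induction n using Int.induction_on with
  | zero => simp [h0, Zsum_zero]
  | succ i ih => rw [hs i, ih, Zsum_succ]; ring
  | pred i ih =>
      have := hs (-i - 1)
      have z := Zsum_succ F (-i - 1)
      simp only [sub_add_cancel] at this z
      rw [this, z] at ih
      linarith

theorem moutard_bilinear_potential_closed
    (φ φc H : ℤ × ℤ → ℝ)
    (hφ : ∀ m k : ℤ, φ (m + 1, k + 1) = -φ (m, k) + H (m, k) * (φ (m + 1, k) + φ (m, k + 1)))
    (hφc : ∀ m k : ℤ, φc (m + 1, k + 1) = -φc (m, k) + H (m, k) * (φc (m + 1, k) + φc (m, k + 1))) :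
    (∀ m k : ℤ,
      (φc (m, k + 1) * φ (m + 1, k + 1) - φc (m + 1, k + 1) * φ (m, k + 1))
        - (φc (m, k) * φ (m + 1, k) - φc (m + 1, k) * φ (m, k))
      = (φc (m + 1, k + 1) * φ (m + 1, k) - φc (m + 1, k) * φ (m + 1, k + 1))
        - (φc (m, k + 1) * φ (m, k) - φc (m, k) * φ (m, k + 1))) ∧
    ∃ S : ℤ × ℤ → ℝ, ∀ m k : ℤ,
      S (m + 1, k) - S (m, k) = φc (m, k) * φ (m + 1, k) - φc (m + 1, k) * φ (m, k) ∧
      S (m, k + 1) - S (m, k) = φc (m, k + 1) * φ (m, k) - φc (m, k) * φ (m, k + 1) := by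
  set f : ℤ → ℤ → ℝ := fun m k => φc (m, k) * φ (m + 1, k) - φc (m + 1, k) * φ (m, k) with hf
  set g : ℤ → ℤ → ℝ := fun m k => φc (m, k + 1) * φ (m, k) - φc (m, k) * φ (m, k + 1) with hg
  have closed : ∀ m k : ℤ,
      (φc (m, k + 1) * φ (m + 1, k + 1) - φc (m + 1, k + 1) * φ (m, k + 1))
        - (φc (m, k) * φ (m + 1, k) - φc (m + 1, k) * φ (m, k))
      = (φc (m + 1, k + 1) * φ (m + 1, k) - φc (m + 1, k) * φ (m + 1, k + 1))
        - (φc (m, k + 1) * φ (m, k) - φc (m, k) * φ (m, k + 1)) := by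
    intro m k
    rw [hφ m k, hφc m k]
    ring
  refine ⟨closed, ?_⟩
  have key : ∀ m k : ℤ, f m (k + 1) - f m k = g (m + 1) k - g m k := by
    intro m k
    have := closed m k
    simp only [hf, hg]
    -- the closed relation equals this after rewriting f (m+1,k+1) etc
    have e1 : f m (k + 1) = φc (m, k + 1) * φ (m + 1, k + 1) - φc (m + 1, k + 1) * φ (m, k + 1) := rfl
    linarith [closed m k]
  -- S m k = Zsum (fun i => f i 0) m + Zsum (g m) k
  refine ⟨fun p => Zsum (fun i => f i 0) p.1 + Zsum (g p.1) p.2, ?_⟩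
  intro m k
  constructor
  · show Zsum (fun i => f i 0) (m + 1) + Zsum (g (m + 1)) k
      - (Zsum (fun i => f i 0) m + Zsum (g m) k) = f m k
    have hfk : ∀ n : ℤ, f m n = f m 0 + Zsum (fun j => g (m + 1) j - g m j) n := by
      refine Zsum_char rfl ?_
      intro n
      have := key m n
      linarith
    have hsplit : ∀ n : ℤ, Zsum (fun j => g (m + 1) j - g m j) n
        = Zsum (g (m + 1)) n - Zsum (g m) n := by
      intro n
      simp [Zsum, Finset.sum_sub_distrib]
      ring
    rw [Zsum_succ, hfk k, hsplit k]
    ring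
  · show Zsum (fun i => f i 0) m + Zsum (g m) (k + 1)
      - (Zsum (fun i => f i 0) m + Zsum (g m) k) = g m k
    rw [Zsum_succ]
    ring
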